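/- Let t, θ > 0 and z ≥ 0, and let μ be the Gaussian measure on ℝ with mean 0 and variance t. Then ∫_ℝ ( 1_{[0,z)}(|w|) + e^{−2θ(|w| − z)} · 1_{[z,∞)}(|w|) ) μ(dw) = 2 Φ(z/√t) − 1 + 2 e^{2θ(z + θ t)} Φ(−2θ√t − z/√t). -/

import Mathlib

open MeasureTheory ProbabilityTheory

/-- The standard normal cumulative distribution function. -/
noncomputable def stdNormalCdf (x : ℝ) : ℝ :=
  (Real.sqrt (2 * Real.pi))⁻¹ * ∫ u in Set.Iic x, Real.exp (-u^2 / 2)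

open Set Real
open scoped NNReal ENNReal

lemma gauss_integrable : Integrable (fun u : ℝ => Real.exp (-u^2/2)) := by
  have h := integrable_exp_neg_mul_sq (b := (1:ℝ)/2) (by norm_num)
  convert h using 2 with x
  ring_nf

lemma gauss_total : ∫ u : ℝ, Real.exp (-u^2/2) = Real.sqrt (2 * Real.pi) := by
  have h := integral_gaussian ((1:ℝ)/2)
  have : (fun u : ℝ => Real.exp (-u^2/2)) = fun u : ℝ => Real.exp (-(1/2) * u^2) := by
    funext u; ring_nf
  rw [this, h]
  rw [show Real.pi / (1/2) = 2 * Real.pi by ring]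

lemma gauss_Iic_neg (m : ℝ) :
    ∫ u in Iic (-m), Real.exp (-u^2/2) = ∫ u in Ioi m, Real.exp (-u^2/2) := by
  rw [← integral_comp_neg_Ioi]
  refine setIntegral_congr_fun measurableSet_Ioi (fun x _ => ?_)
  ring_nf

lemma stdNormalCdf_zero : stdNormalCdf 0 = 1/2 := by
  have key : (∫ u in Iic (0:ℝ), Real.exp (-u^2/2)) + ∫ u in Ioi (0:ℝ), Real.exp (-u^2/2)
      = Real.sqrt (2 * Real.pi) := by
    rw [← gauss_total, ← setIntegral_union (Iic_disjoint_Ioi le_rfl) measurableSet_Ioi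
      gauss_integrable.integrableOn gauss_integrable.integrableOn, Iic_union_Ioi,
      Measure.restrict_univ]
  have h2 : ∫ u in Iic (0:ℝ), Real.exp (-u^2/2) = ∫ u in Ioi (0:ℝ), Real.exp (-u^2/2) := by
    simpa using gauss_Iic_neg 0
  rw [h2] at key
  have hπ : (0:ℝ) < Real.sqrt (2 * Real.pi) := Real.sqrt_pos.mpr (by positivity)
  rw [stdNormalCdf, h2, inv_mul_eq_div, div_eq_iff hπ.ne']
  linarith

lemma stdNormalCdf_Ioi (m : ℝ) :
    ∫ u in Ioi m, Real.exp (-u^2/2) = Real.sqrt (2 * Real.pi) * stdNormalCdf (-m) := by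
  rw [stdNormalCdf, ← gauss_Iic_neg m]
  have hπ : (0:ℝ) < Real.sqrt (2 * Real.pi) := Real.sqrt_pos.mpr (by positivity)
  field_simp

lemma integral_Ioi_add (f : ℝ → ℝ) (a c : ℝ) :
    ∫ x in Ioi a, f (x + c) = ∫ x in Ioi (a + c), f x := by
  rw [← integral_indicator measurableSet_Ioi, ← integral_indicator measurableSet_Ioi]
  have : ∀ x : ℝ, (Ioi a).indicator (fun x => f (x + c)) x
      = (Ioi (a + c)).indicator f (x + c) := by
    intro x
    by_cases hx : x ∈ Ioi a
    · rw [indicator_of_mem hx, indicator_of_mem (by simpa using hx.out)]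
    · rw [indicator_of_notMem hx, indicator_of_notMem]
      simp only [mem_Ioi] at hx ⊢
      linarith [hx]
  simp_rw [this]
  exact integral_add_right_eq_self ((Ioi (a + c)).indicator f) c

theorem slowly_reflected_bm_cdf (t θ z : ℝ) (ht : 0 < t) (hθ : 0 < θ) (hz : 0 ≤ z) :
    ∫ w, (if |w| < z then (1 : ℝ) else Real.exp (-2 * θ * (|w| - z)))
        ∂(gaussianReal 0 t.toNNReal)
      = 2 * stdNormalCdf (z / Real.sqrt t) - 1
        + 2 * Real.exp (2 * θ * (z + θ * t)) *
          stdNormalCdf (-2 * θ * Real.sqrt t - z / Real.sqrt t) := by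
  have ht' : t.toNNReal ≠ 0 := by
    simp [Real.toNNReal_eq_zero, not_le, ht]
  have hcoe : ((t.toNNReal : ℝ≥0) : ℝ) = t := Real.coe_toNNReal t ht.le
  have hs : (0:ℝ) < Real.sqrt t := Real.sqrt_pos.mpr ht
  set s := Real.sqrt t with hs_def
  have hss : s * s = t := Real.mul_self_sqrt ht.le
  set c : ℝ := (Real.sqrt (2 * Real.pi * t))⁻¹ with hc_def
  have hcst : c * s = (Real.sqrt (2 * Real.pi))⁻¹ := by
    rw [hc_def, Real.sqrt_mul (by positivity) t, mul_inv, hs_def]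
    field_simp
  -- the pdf
  have hpdf : ∀ x : ℝ, gaussianPDFReal 0 t.toNNReal x = c * Real.exp (-x^2 / (2*t)) := by
    intro x
    rw [gaussianPDFReal, hcoe]
    norm_num
    rw [hc_def]
  -- step 1 : integral wrt gaussianReal as a Lebesgue integral
  have step1 : ∫ w, (if |w| < z then (1 : ℝ) else Real.exp (-2 * θ * (|w| - z)))
        ∂(gaussianReal 0 t.toNNReal)
      = ∫ w, gaussianPDFReal 0 t.toNNReal w *
          (if |w| < z then (1 : ℝ) else Real.exp (-2 * θ * (|w| - z))) := by
    rw [gaussianReal_of_var_ne_zero _ ht', gaussianPDF_def]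
    have hmeq : (fun x => ENNReal.ofReal (gaussianPDFReal 0 t.toNNReal x))
        = fun x => ((gaussianPDFReal 0 t.toNNReal x).toNNReal : ℝ≥0∞) := rfl
    rw [hmeq, integral_withDensity_eq_integral_smul
      ((measurable_gaussianPDFReal 0 t.toNNReal).real_toNNReal) _]
    congr 1
    funext x
    rw [NNReal.smul_def, smul_eq_mul, Real.coe_toNNReal _ (gaussianPDFReal_nonneg _ _ _)]
  -- the function of |w|
  set G : ℝ → ℝ := fun y => gaussianPDFReal 0 t.toNNReal y *
      (if y < z then (1 : ℝ) else Real.exp (-2 * θ * (y - z))) with hG_def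
  have step2 : ∫ w, gaussianPDFReal 0 t.toNNReal w *
          (if |w| < z then (1 : ℝ) else Real.exp (-2 * θ * (|w| - z)))
      = ∫ w : ℝ, G |w| := by
    congr 1
    funext w
    rw [hG_def]
    simp only
    congr 1
    rw [hpdf, hpdf, sq_abs]
  have hGmeas : AEStronglyMeasurable G volume := by
    apply Measurable.aestronglyMeasurable
    apply Measurable.mul (measurable_gaussianPDFReal 0 t.toNNReal)
    exact Measurable.ite measurableSet_Iio measurable_const (by fun_prop)
  have hGbound : Integrable G := by
    have hb : ∀ y : ℝ, ‖(if y < z then (1 : ℝ) else Real.exp (-2 * θ * (y - z)))‖ ≤ 1 := by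
      intro y
      split_ifs with h
      · simp
      · rw [Real.norm_eq_abs, abs_of_pos (Real.exp_pos _)]
        apply Real.exp_le_one_iff.mpr
        nlinarith [not_lt.mp h]
    have := (integrable_gaussianPDFReal 0 t.toNNReal).bdd_mul (c := 1)
      (Measurable.aestronglyMeasurable
        (Measurable.ite measurableSet_Iio measurable_const (by fun_prop))) (ae_of_all _ hb)
    apply this.congr
    filter_upwards with y
    rw [hG_def]; ring
  have step3 : ∫ w : ℝ, G |w| = 2 * ∫ w in Ioi (0:ℝ), G w := integral_comp_abs
  -- split the half-line integral
  have hsplit : ∫ w in Ioi (0:ℝ), G w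
      = (∫ w in Ioc 0 z, G w) + ∫ w in Ioi z, G w := by
    rw [← setIntegral_union (Ioc_disjoint_Ioi le_rfl) measurableSet_Ioi
      hGbound.integrableOn hGbound.integrableOn, Ioc_union_Ioi_eq_Ioi hz]
  -- part 1
  have hpart1 : ∫ w in Ioc 0 z, G w
      = (Real.sqrt (2 * Real.pi))⁻¹ * ∫ u in Ioc 0 (z/s), Real.exp (-u^2/2) := by
    have h1 : ∫ w in Ioc 0 z, G w = ∫ w in Ioc 0 z, c * Real.exp (-(w/s)^2/2) := by
      refine setIntegral_congr_fun measurableSet_Ioc (fun y hy => ?_)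
      rw [hG_def]
      simp only
      have hval : (if y < z then (1 : ℝ) else Real.exp (-2 * θ * (y - z))) = 1 := by
        split_ifs with h
        · rfl
        · have : y = z := le_antisymm hy.2 (not_lt.mp h)
          simp [this]
      rw [hval, mul_one, hpdf, div_pow, Real.sq_sqrt ht.le]
      ring_nf
    rw [h1, ← intervalIntegral.integral_of_le hz, intervalIntegral.integral_const_mul,
      intervalIntegral.integral_comp_div (fun u => Real.exp (-u^2/2)) hs.ne']
    rw [zero_div, smul_eq_mul, intervalIntegral.integral_of_le (by positivity)]
    rw [← hcst]; ring
  have hIoc : ∫ u in Ioc 0 (z/s), Real.exp (-u^2/2)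
      = Real.sqrt (2 * Real.pi) * (stdNormalCdf (z/s) - 1/2) := by
    rw [← intervalIntegral.integral_of_le (by positivity),
      ← intervalIntegral.integral_Iic_sub_Iic gauss_integrable.integrableOn
        gauss_integrable.integrableOn]
    have hΦ : ∫ u in Iic (z/s), Real.exp (-u^2/2)
        = Real.sqrt (2 * Real.pi) * stdNormalCdf (z/s) := by
      rw [stdNormalCdf]
      have hπ : (0:ℝ) < Real.sqrt (2 * Real.pi) := Real.sqrt_pos.mpr (by positivity)
      field_simp
    have hΦ0 : ∫ u in Iic (0:ℝ), Real.exp (-u^2/2)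
        = Real.sqrt (2 * Real.pi) * (1/2) := by
      have h0 := stdNormalCdf_zero
      rw [stdNormalCdf] at h0
      have hπ : (0:ℝ) < Real.sqrt (2 * Real.pi) := Real.sqrt_pos.mpr (by positivity)
      field_simp at h0 ⊢
      linarith
    rw [hΦ, hΦ0]; ring
  -- part 2
  have hm : -2 * θ * s - z / s = -((z + 2*θ*t)/s) := by
    field_simp
    nlinarith [hss]
  have hpart2 : ∫ w in Ioi z, G w
      = Real.exp (2 * θ * (z + θ * t)) * (Real.sqrt (2 * Real.pi))⁻¹ *
        (Real.sqrt (2 * Real.pi) * stdNormalCdf (-2 * θ * s - z / s)) := by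
    have h1 : ∫ w in Ioi z, G w
        = ∫ w in Ioi z, (c * Real.exp (2 * θ * (z + θ * t))) *
            Real.exp (-((w + 2*θ*t)/s)^2/2) := by
      refine setIntegral_congr_fun measurableSet_Ioi (fun y hy => ?_)
      rw [hG_def]
      simp only
      rw [if_neg (not_lt.mpr (le_of_lt hy.out)), hpdf]
      have h4 : ((y + 2*θ*t)/s)^2 = (y + 2*θ*t)^2 / t := by
        rw [div_pow, Real.sq_sqrt ht.le]
      have e1 : Real.exp (-y^2/(2*t)) * Real.exp (-2*θ*(y-z))
          = Real.exp (2*θ*(z+θ*t)) * Real.exp (-((y + 2*θ*t)/s)^2/2) := by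
        rw [← Real.exp_add, ← Real.exp_add, h4]
        congr 1
        field_simp
        ring
      rw [mul_assoc c, e1]; ring
    rw [h1, integral_const_mul]
    have h2 : ∫ w in Ioi z, Real.exp (-((w + 2*θ*t)/s)^2/2)
        = ∫ w in Ioi (z + 2*θ*t), Real.exp (-(w/s)^2/2) :=
      integral_Ioi_add (fun w => Real.exp (-(w/s)^2/2)) z (2*θ*t)
    have h3 : ∫ w in Ioi (z + 2*θ*t), Real.exp (-(w/s)^2/2)
        = s * ∫ u in Ioi ((z + 2*θ*t)/s), Real.exp (-u^2/2) := by
      have hmul := integral_comp_mul_left_Ioi (fun u => Real.exp (-u^2/2)) (z + 2*θ*t)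
        (b := s⁻¹) (by positivity)
      simp only [smul_eq_mul, inv_inv] at hmul
      have e : ∀ w : ℝ, Real.exp (-(w/s)^2/2) = Real.exp (-(s⁻¹*w)^2/2) := by
        intro w; rw [div_eq_inv_mul w s]
      simp_rw [e]
      rw [show (z + 2*θ*t)/s = s⁻¹*(z+2*θ*t) from div_eq_inv_mul _ _]
      exact hmul
    rw [h2, h3, stdNormalCdf_Ioi, hm]
    rw [← hcst]
    ring
  rw [step1, step2, step3, hsplit, hpart1, hIoc, hpart2]
  have hπ : (0:ℝ) < Real.sqrt (2 * Real.pi) := Real.sqrt_pos.mpr (by positivity)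
  field_simp
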